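/- Let ρ, θ > 0 and set φ = log(ρ/θ^{3/2}) + 5/2, w = log θ. Then with M₁₁ = ρθ, M₁₂ = (5/2)ρθ², M₂₂ = θ²(1 + (35/4)ρθ), the flux identities M₁₁∇φ + M₁₂ e^{−w}∇w = ∇(ρθ) and M₁₂∇φ + M₂₂ e^{−w}∇w = ∇(θ + (5/2)ρθ²) hold for differentiable positive fields ρ, θ on an open set of ℝ³. -/

import Mathlib

open Real

/-- If `f` has Fréchet derivative `a • fderiv ρ + b • fderiv θ` at `x`, its gradient is the
corresponding combination of the gradients of `ρ` and `θ`. -/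
lemma gradient_comb {F : Type*} [NormedAddCommGroup F] [InnerProductSpace ℝ F] [CompleteSpace F]
    {f ρ θ : F → ℝ} {x : F} {a b : ℝ}
    (h : HasFDerivAt f (a • fderiv ℝ ρ x + b • fderiv ℝ θ x) x) :
    gradient f x = a • gradient ρ x + b • gradient θ x := by
  unfold gradient
  rw [h.fderiv]
  simp

/-- Flux identities: with entropy variables `φ = log(ρ/θ^{3/2}) + 5/2`, `w = log θ`
and Onsager coefficients `M₁₁ = ρθ`, `M₁₂ = (5/2)ρθ²`, `M₂₂ = θ²(1 + (35/4)ρθ)`,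
one has `M₁₁∇φ + M₁₂ e^{−w}∇w = ∇(ρθ)` and
`M₁₂∇φ + M₂₂ e^{−w}∇w = ∇(θ + (5/2)ρθ²)`. -/
theorem flux_identities (U : Set (EuclideanSpace ℝ (Fin 3))) (hU : IsOpen U)
    (ρ θ : EuclideanSpace ℝ (Fin 3) → ℝ)
    (hρpos : ∀ x ∈ U, 0 < ρ x) (hθpos : ∀ x ∈ U, 0 < θ x)
    (hρ : ∀ x ∈ U, DifferentiableAt ℝ ρ x) (hθ : ∀ x ∈ U, DifferentiableAt ℝ θ x) :
    ∀ x ∈ U,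
      (ρ x * θ x) •
          gradient (fun y => Real.log (ρ y / θ y ^ ((3:ℝ)/2)) + 5/2) x
        + ((5/2) * ρ x * θ x ^ 2 * Real.exp (-Real.log (θ x))) •
          gradient (fun y => Real.log (θ y)) x
        = gradient (fun y => ρ y * θ y) x ∧
      ((5/2) * ρ x * θ x ^ 2) •
          gradient (fun y => Real.log (ρ y / θ y ^ ((3:ℝ)/2)) + 5/2) x
        + (θ x ^ 2 * (1 + (35/4) * ρ x * θ x) * Real.exp (-Real.log (θ x))) •
          gradient (fun y => Real.log (θ y)) x
        = gradient (fun y => θ y + (5/2) * ρ y * θ y ^ 2) x := by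
  intro x hx
  have hρx := hρ x hx
  have hθx := hθ x hx
  have hρ0 : 0 < ρ x := hρpos x hx
  have hθ0 : 0 < θ x := hθpos x hx
  have hρ' : HasFDerivAt ρ (fderiv ℝ ρ x) x := hρx.hasFDerivAt
  have hθ' : HasFDerivAt θ (fderiv ℝ θ x) x := hθx.hasFDerivAt
  -- gradient of w = log θ
  have hw : gradient (fun y => Real.log (θ y)) x
      = (0:ℝ) • gradient ρ x + (θ x)⁻¹ • gradient θ x := by
    apply gradient_comb
    have := hθ'.log hθ0.ne'
    convert this using 1
    module
  -- gradient of φ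
  have hφ : gradient (fun y => Real.log (ρ y / θ y ^ ((3:ℝ)/2)) + 5/2) x
      = (ρ x)⁻¹ • gradient ρ x + (-(3/2) * (θ x)⁻¹) • gradient θ x := by
    apply gradient_comb
    have hψ : HasFDerivAt (fun y => Real.log (ρ y) - 3/2 * Real.log (θ y) + 5/2)
        ((ρ x)⁻¹ • fderiv ℝ ρ x + (-(3/2) * (θ x)⁻¹) • fderiv ℝ θ x) x := by
      have := ((hρ'.log hρ0.ne').sub ((hθ'.log hθ0.ne').const_mul (3/2))).add_const (5/2)
      refine this.congr_fderiv ?_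
      module
    apply hψ.congr_of_eventuallyEq
    filter_upwards [hρx.continuousAt.eventually (eventually_gt_nhds hρ0),
      hθx.continuousAt.eventually (eventually_gt_nhds hθ0)] with y h1 h2
    rw [Real.log_div h1.ne' (Real.rpow_pos_of_pos h2 _).ne', Real.log_rpow h2]
  -- gradient of ρθ
  have hm : gradient (fun y => ρ y * θ y) x
      = (θ x) • gradient ρ x + (ρ x) • gradient θ x := by
    apply gradient_comb
    have := hρ'.mul hθ'
    refine this.congr_fderiv ?_
    module
  -- gradient of θ + (5/2)ρθ²
  have he : gradient (fun y => θ y + (5/2) * ρ y * θ y ^ 2) x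
      = ((5/2) * θ x ^ 2) • gradient ρ x + (1 + 5 * ρ x * θ x) • gradient θ x := by
    apply gradient_comb
    have hsq : HasFDerivAt (fun y => θ y ^ 2) (θ x • fderiv ℝ θ x + θ x • fderiv ℝ θ x) x := by
      simp only [pow_two]
      exact hθ'.mul hθ'
    have h2 := hθ'.add ((hρ'.const_mul (5/2)).mul hsq)
    refine h2.congr_fderiv ?_
    module
  rw [hw, hφ, hm, he, Real.exp_neg, Real.exp_log hθ0]
  constructor <;> (match_scalars <;> field_simp <;> ring)
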